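/- There exist a countably 1-rectifiable set S ⊂ [0,1]^2, namely S = ⋃_j {1/j} × [0,1] with b ≡ 1 on S and a = ∞, and points x_j = (1/j, 0), y_j = (1/j, 1) converging to x = (0,0), y = (0,1), such that d_{S,∞,b}(x_j, y_j) = 1 for all j but d_{S,∞,b}(x,y) = ∞; hence without the finiteness assumption H^1(S_λ) < ∞ the urban metric fails to be lower semi-continuous. -/

import Mathlib

open MeasureTheory Set Filter Topology
open scoped ENNReal NNReal

noncomputable section

/-- Euclidean space `ℝ^n`. -/
abbrev Euc (n : ℕ) : Type := EuclideanSpace ℝ (Fin n)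

/-- The hypercube `[-1,1]^n`. -/
def cube (n : ℕ) : Set (Euc n) := {x | ∀ i, |x i| ≤ 1}

/-- A set is countably `1`-rectifiable if it is a countable union of Lipschitz images of
bounded subsets of `ℝ`. -/
def Countably1Rectifiable {n : ℕ} (S : Set (Euc n)) : Prop :=
  ∃ (f : ℕ → ℝ → Euc n) (A : ℕ → Set ℝ),
    (∀ i, ∃ K : ℝ≥0, LipschitzOnWith K (f i) (A i)) ∧
    (∀ i, Bornology.IsBounded (A i)) ∧ S = ⋃ i, (f i) '' (A i)

/-- The cost of travelling along a Lipschitz path, with friction coefficient `bext`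
(already extended by the off-network cost outside the network). -/
def pathCost {n : ℕ} (bext : Euc n → ℝ≥0∞) (γ : ℝ → Euc n) : ℝ≥0∞ :=
  ∫⁻ t in Icc (0:ℝ) 1, bext (γ t) * ENNReal.ofReal ‖deriv γ t‖

/-- Travel cost infimum over unconstrained Lipschitz paths in the plane. -/
def freeDist (bext : Euc 2 → ℝ≥0∞) (x y : Euc 2) : ℝ≥0∞ :=
  sInf {c | ∃ (γ : ℝ → Euc 2) (K : ℝ≥0), LipschitzWith K γ ∧
    γ 0 = x ∧ γ 1 = y ∧ c = pathCost bext γ}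

/-- The point `(s, t)` of the plane. -/
def pt (s t : ℝ) : Euc 2 := (WithLp.equiv 2 (Fin 2 → ℝ)).symm ![s, t]

/-- The network `S = ⋃_{j ≥ 1} {1/j} × [0,1]`. -/
def S12 : Set (Euc 2) :=
  {x | (∃ j : ℕ, 1 ≤ j ∧ x 0 = 1 / (j : ℝ)) ∧ x 1 ∈ Icc (0:ℝ) 1}

open Classical in
/-- Friction coefficient `b ≡ 1` on `S`, cost `a = ∞` off the network. -/
def b12 (z : Euc 2) : ℝ≥0∞ := if z ∈ S12 then 1 else ⊤

/-! ### Auxiliary lemmas -/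

section FTC

variable {E : Type*} [NormedAddCommGroup E] [NormedSpace ℝ E] [FiniteDimensional ℝ E]
  [MeasurableSpace E] [BorelSpace E]

set_option linter.unusedSectionVars false

/-- Fundamental theorem of calculus for Lipschitz curves, via difference quotients and
dominated convergence. -/
theorem lipschitz_eq_integral_deriv {f : ℝ → E} {K : ℝ≥0} (hf : LipschitzWith K f)
    {a b : ℝ} (hab : a ≤ b) : f b - f a = ∫ t in a..b, deriv f t := by
  have hcont : Continuous f := hf.continuous
  set F : ℕ → ℝ → E := fun n t => (n : ℝ) • (f (t + 1 / n) - f t) with hF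
  have hInt : ∀ c d : ℝ, IntervalIntegrable f volume c d := fun c d =>
    hcont.intervalIntegrable c d
  have stepA : ∀ n : ℕ, ∫ t in a..b, F n t
      = (n : ℝ) • ((∫ t in b..(b + 1/n), f t) - ∫ t in a..(a + 1/n), f t) := by
    intro n
    have h1 : ∫ t in a..b, f (t + 1/n) = ∫ t in (a + 1/n)..(b + 1/n), f t :=
      intervalIntegral.integral_comp_add_right f (1/n)
    have h2 : (∫ t in a..(a+1/n), f t) + ∫ t in (a+1/n)..(b+1/n), f t
        = (∫ t in a..b, f t) + ∫ t in b..(b+1/n), f t := by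
      rw [intervalIntegral.integral_add_adjacent_intervals (hInt _ _) (hInt _ _),
        intervalIntegral.integral_add_adjacent_intervals (hInt _ _) (hInt _ _)]
    have hInt' : IntervalIntegrable (fun t => f (t + 1/(n:ℝ))) volume a b := by
      apply Continuous.intervalIntegrable; continuity
    have h3 : ∫ t in a..b, F n t
        = (n : ℝ) • ((∫ t in a..b, f (t + 1/n)) - ∫ t in a..b, f t) := by
      rw [hF]
      rw [intervalIntegral.integral_smul, intervalIntegral.integral_sub hInt' (hInt _ _)]
    rw [h3, h1]
    congr 1
    calc (∫ t in (a + 1/(n:ℝ))..(b + 1/(n:ℝ)), f t) - ∫ t in a..b, f t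
        = ((∫ t in a..(a+1/(n:ℝ)), f t) + ∫ t in (a+1/(n:ℝ))..(b+1/(n:ℝ)), f t)
          - ((∫ t in a..(a+1/(n:ℝ)), f t) + ∫ t in a..b, f t) := by abel
      _ = ((∫ t in a..b, f t) + ∫ t in b..(b+1/(n:ℝ)), f t)
          - ((∫ t in a..(a+1/(n:ℝ)), f t) + ∫ t in a..b, f t) := by rw [h2]
      _ = (∫ t in b..(b+1/(n:ℝ)), f t) - ∫ t in a..(a+1/(n:ℝ)), f t := by abel
  have stepB : ∀ c : ℝ, Tendsto (fun n : ℕ => (n : ℝ) • ∫ t in c..(c + 1/n), f t)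
      atTop (𝓝 (f c)) := by
    intro c
    rw [← tendsto_sub_nhds_zero_iff]
    refine squeeze_zero_norm' (a := fun n : ℕ => (K : ℝ) / n) ?_ ?_
    · filter_upwards [eventually_ge_atTop 1] with n hn
      have hn0 : (0:ℝ) < n := by exact_mod_cast hn
      have key : (n : ℝ) • (∫ t in c..(c + 1/n), f t) - f c
          = (n : ℝ) • ∫ t in c..(c + 1/n), (f t - f c) := by
        rw [intervalIntegral.integral_sub (hInt _ _) intervalIntegrable_const, smul_sub,
          intervalIntegral.integral_const, add_sub_cancel_left, smul_smul, mul_one_div,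
          div_self hn0.ne', one_smul]
      rw [key]
      have hb : ∀ x ∈ Set.uIoc c (c + 1/n), ‖f x - f c‖ ≤ (K : ℝ) / n := by
        intro x hx
        have h1n : (0:ℝ) < 1/n := by positivity
        have h1 : dist x c ≤ 1 / n := by
          rw [Set.uIoc_of_le (le_add_of_nonneg_right h1n.le)] at hx
          rw [Real.dist_eq, abs_le]
          exact ⟨by linarith [hx.1], by linarith [hx.2]⟩
        calc ‖f x - f c‖ = dist (f x) (f c) := by rw [dist_eq_norm]
          _ ≤ K * dist x c := hf.dist_le_mul x c
          _ ≤ K * (1/n) := by gcongr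
          _ = K / n := by ring
      have := intervalIntegral.norm_integral_le_of_norm_le_const hb
      rw [norm_smul]
      have habs : |c + 1/n - c| = 1/n := by
        rw [add_sub_cancel_left, abs_of_pos (by positivity)]
      rw [habs] at this
      calc ‖(n:ℝ)‖ * ‖∫ t in c..(c+1/n), (f t - f c)‖
          ≤ ‖(n:ℝ)‖ * ((K : ℝ)/n * (1/n)) := by gcongr
        _ = (K : ℝ) / n := by
            rw [Real.norm_eq_abs, abs_of_pos hn0]; field_simp
    · have : Tendsto (fun n : ℕ => (K:ℝ) * (1/n)) atTop (𝓝 ((K:ℝ) * 0)) :=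
        tendsto_const_nhds.mul tendsto_one_div_atTop_nhds_zero_nat
      simpa [div_eq_mul_inv, one_div] using this
  have stepC : ∀ᵐ t ∂(volume.restrict (Ioc a b)),
      Tendsto (fun n => F n t) atTop (𝓝 (deriv f t)) := by
    apply ae_restrict_of_ae
    filter_upwards [hf.ae_differentiableAt] with t ht
    have hd : HasDerivAt f (deriv f t) t := ht.hasDerivAt
    rw [hasDerivAt_iff_tendsto_slope] at hd
    have h1 : Tendsto (fun n : ℕ => t + 1/n) atTop (𝓝[≠] t) := by
      apply tendsto_nhdsWithin_of_tendsto_nhds_of_eventually_within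
      · simpa using (tendsto_const_nhds : Tendsto (fun _ : ℕ => t) atTop (𝓝 t)).add tendsto_one_div_atTop_nhds_zero_nat
      · filter_upwards [eventually_ge_atTop 1] with n hn
        have : (0:ℝ) < 1/n := by positivity
        simp only [mem_compl_iff, mem_singleton_iff]
        intro h; nlinarith [this]
    have h2 := hd.comp h1
    apply h2.congr'
    filter_upwards [eventually_ge_atTop 1] with n hn
    have hn0 : (0:ℝ) < n := by exact_mod_cast hn
    simp only [Function.comp_apply, slope_def_module, hF]
    rw [add_sub_cancel_left]
    rw [one_div, inv_inv]
  have hmeasF : ∀ n : ℕ, AEStronglyMeasurable (F n) (volume.restrict (Ioc a b)) := by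
    intro n
    exact ((hcont.comp (by continuity)).sub hcont).const_smul ((n:ℝ)) |>.aestronglyMeasurable
  have hbound : ∀ n : ℕ, ∀ᵐ t ∂(volume.restrict (Ioc a b)), ‖F n t‖ ≤ (K : ℝ) := by
    intro n
    apply ae_of_all
    intro t
    rw [hF]
    simp only
    rw [norm_smul, Real.norm_natCast]
    rcases Nat.eq_zero_or_pos n with h | h
    · simp [h]
    have hn0 : (0:ℝ) < n := by exact_mod_cast h
    calc (n:ℝ) * ‖f (t + 1/n) - f t‖ ≤ (n:ℝ) * (K * dist (t + 1/n) t) := by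
          gcongr
          rw [← dist_eq_norm]
          exact hf.dist_le_mul _ _
      _ = (K : ℝ) := by
          rw [Real.dist_eq, add_sub_cancel_left, abs_of_pos (by positivity)]
          field_simp
  have hDCT := MeasureTheory.tendsto_integral_of_dominated_convergence
    (μ := volume.restrict (Ioc a b)) (F := F) (f := fun t => deriv f t)
    (fun _ => (K:ℝ)) hmeasF
    (integrableOn_const measure_Ioc_lt_top.ne) hbound stepC
  have hlim1 : Tendsto (fun n => ∫ t in a..b, F n t) atTop (𝓝 (f b - f a)) := by
    simp only [stepA]
    have := ((stepB b).sub (stepB a))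
    simpa [smul_sub] using this
  have hlim2 : Tendsto (fun n => ∫ t in a..b, F n t) atTop
      (𝓝 (∫ t in a..b, deriv f t)) := by
    have heq : ∀ n, ∫ t in a..b, F n t = ∫ t in Ioc a b, F n t ∂volume := fun n =>
      intervalIntegral.integral_of_le hab
    rw [intervalIntegral.integral_of_le hab]
    simpa [heq] using hDCT
  exact tendsto_nhds_unique hlim1 hlim2

theorem lip_norm_deriv_le {f : ℝ → E} {K : ℝ≥0} (hf : LipschitzWith K f) (t : ℝ) :
    ‖deriv f t‖ ≤ K := by
  by_cases h : DifferentiableAt ℝ f t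
  · have hd := h.hasDerivAt
    rw [hasDerivAt_iff_tendsto_slope] at hd
    refine le_of_tendsto hd.norm ?_
    filter_upwards [self_mem_nhdsWithin] with y hy
    have hyt : y ≠ t := hy
    have hne : |y - t| ≠ 0 := by
      simpa [abs_eq_zero, sub_eq_zero] using hyt
    rw [slope_def_module, norm_smul, norm_inv, Real.norm_eq_abs]
    calc |y - t|⁻¹ * ‖f y - f t‖ ≤ |y - t|⁻¹ * (K * |y - t|) := by
          apply mul_le_mul_of_nonneg_left _ (by positivity)
          have := hf.dist_le_mul y t
          rwa [dist_eq_norm, Real.dist_eq] at this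
      _ = K := by field_simp
  · simp [deriv_zero_of_not_differentiableAt h]

theorem lip_ofReal_norm_sub_le {f : ℝ → E} {K : ℝ≥0} (hf : LipschitzWith K f)
    {a b : ℝ} (hab : a ≤ b) :
    ENNReal.ofReal ‖f b - f a‖ ≤ ∫⁻ t in Icc a b, ENNReal.ofReal ‖deriv f t‖ := by
  have hmeas : Measurable fun t => ‖deriv f t‖ := (measurable_deriv f).norm
  have hint : IntegrableOn (fun t => ‖deriv f t‖) (Ioc a b) := by
    refine ⟨hmeas.aestronglyMeasurable, ?_⟩
    have : IsFiniteMeasure (volume.restrict (Ioc a b)) :=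
      ⟨by rw [Measure.restrict_apply_univ]; exact measure_Ioc_lt_top⟩
    exact HasFiniteIntegral.of_bounded (C := (K : ℝ))
      (ae_of_all _ fun t => by simpa using lip_norm_deriv_le hf t)
  calc ENNReal.ofReal ‖f b - f a‖
      = ENNReal.ofReal ‖∫ t in a..b, deriv f t‖ := by
        rw [← lipschitz_eq_integral_deriv hf hab]
    _ ≤ ENNReal.ofReal (∫ t in a..b, ‖deriv f t‖) :=
        ENNReal.ofReal_le_ofReal (intervalIntegral.norm_integral_le_integral_norm hab)
    _ = ENNReal.ofReal (∫ t in Ioc a b, ‖deriv f t‖) := by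
        rw [intervalIntegral.integral_of_le hab]
    _ = ∫⁻ t in Ioc a b, ENNReal.ofReal ‖deriv f t‖ :=
        ofReal_integral_eq_lintegral_ofReal hint (ae_of_all _ fun t => norm_nonneg _)
    _ ≤ ∫⁻ t in Icc a b, ENNReal.ofReal ‖deriv f t‖ :=
        lintegral_mono' (Measure.restrict_mono Ioc_subset_Icc_self le_rfl) le_rfl

end FTC

/-- A continuous function crossing an interval `(α, β)` does so over a time interval
during which it stays inside `[α, β]`. -/
lemma crossing {u : ℝ → ℝ} (hu : Continuous u) {t1 t2 α β : ℝ} (h12 : t1 ≤ t2)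
    (h1 : u t1 ≤ α) (hαβ : α < β) (h2 : β ≤ u t2) :
    ∃ s1 s2, t1 ≤ s1 ∧ s1 < s2 ∧ s2 ≤ t2 ∧ u s1 = α ∧ u s2 = β ∧
      ∀ t ∈ Ioo s1 s2, u t ∈ Ioo α β := by
  set B : Set ℝ := {t | t ∈ Icc t1 t2 ∧ u t = β} with hB
  have hBclosed : IsClosed B := by
    have : B = Icc t1 t2 ∩ {t | u t = β} := rfl
    rw [this]
    exact isClosed_Icc.inter (isClosed_eq hu continuous_const)
  have hBne : B.Nonempty := by
    have : β ∈ Icc (u t1) (u t2) := ⟨le_of_lt (lt_of_le_of_lt h1 hαβ), h2⟩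
    obtain ⟨s, hs, hus⟩ := intermediate_value_Icc h12 hu.continuousOn this
    exact ⟨s, hs, hus⟩
  have hBbdd : BddBelow B := ⟨t1, fun t ht => ht.1.1⟩
  set s2 := sInf B with hs2
  have hs2B : s2 ∈ B := hBclosed.csInf_mem hBne hBbdd
  have hs2Icc : s2 ∈ Icc t1 t2 := hs2B.1
  have hus2 : u s2 = β := hs2B.2
  have hlt : ∀ t ∈ Ico t1 s2, u t < β := by
    intro t ht
    by_contra hge
    push_neg at hge
    have : β ∈ Icc (u t1) (u t) := ⟨le_of_lt (lt_of_le_of_lt h1 hαβ), hge⟩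
    obtain ⟨s, hs, hus⟩ := intermediate_value_Icc ht.1 hu.continuousOn this
    have hsB : s ∈ B := ⟨⟨hs.1, le_trans hs.2 (le_trans ht.2.le hs2Icc.2)⟩, hus⟩
    exact absurd (csInf_le hBbdd hsB) (by push_neg; exact lt_of_le_of_lt hs.2 ht.2)
  set A : Set ℝ := {t | t ∈ Icc t1 s2 ∧ u t = α} with hA
  have hAclosed : IsClosed A := isClosed_Icc.inter (isClosed_eq hu continuous_const)
  have hAne : A.Nonempty := by
    have : α ∈ Icc (u t1) (u s2) := ⟨h1, by rw [hus2]; exact hαβ.le⟩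
    obtain ⟨s, hs, hus⟩ := intermediate_value_Icc hs2Icc.1 hu.continuousOn this
    exact ⟨s, hs, hus⟩
  have hAbdd : BddAbove A := ⟨s2, fun t ht => ht.1.2⟩
  set s1 := sSup A with hs1
  have hs1A : s1 ∈ A := hAclosed.csSup_mem hAne hAbdd
  have hus1 : u s1 = α := hs1A.2
  have hs1s2 : s1 < s2 := by
    rcases lt_or_eq_of_le hs1A.1.2 with h | h
    · exact h
    · rw [h, hus2] at hus1; exact absurd hus1 (ne_of_gt hαβ)
  have hgt : ∀ t ∈ Ioc s1 s2, α < u t := by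
    intro t ht
    by_contra hle
    push_neg at hle
    have : α ∈ Icc (u t) (u s2) := ⟨hle, by rw [hus2]; exact hαβ.le⟩
    obtain ⟨s, hs, hus⟩ := intermediate_value_Icc ht.2 hu.continuousOn this
    have hsA : s ∈ A := ⟨⟨le_trans hs1A.1.1 (le_trans ht.1.le hs.1), hs.2⟩, hus⟩
    exact absurd (le_csSup hAbdd hsA) (by push_neg; exact lt_of_lt_of_le ht.1 hs.1)
  refine ⟨s1, s2, hs1A.1.1, hs1s2, hs2Icc.2, hus1, hus2, fun t ht => ?_⟩
  exact ⟨hgt t ⟨ht.1, ht.2.le⟩, hlt t ⟨le_trans hs1A.1.1 ht.1.le, ht.2⟩⟩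

/-! ### Geometry of `pt`, `S12`, `b12` -/

@[simp] lemma pt_apply0 (s t : ℝ) : pt s t 0 = s := rfl
@[simp] lemma pt_apply1 (s t : ℝ) : pt s t 1 = t := rfl

lemma euc_ext (x : Euc 2) : x = pt (x 0) (x 1) := by
  ext i
  fin_cases i <;> rfl

lemma pt_sub (a b c d : ℝ) : pt a b - pt c d = pt (a - c) (b - d) := by
  ext i; fin_cases i <;> rfl

lemma dist_pt (a b c d : ℝ) :
    dist (pt a b) (pt c d) = Real.sqrt ((a - c)^2 + (b - d)^2) := by
  rw [EuclideanSpace.dist_eq, Fin.sum_univ_two]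
  simp [Real.dist_eq, sq_abs]

lemma norm_pt (a b : ℝ) : ‖pt a b‖ = Real.sqrt (a^2 + b^2) := by
  rw [EuclideanSpace.norm_eq, Fin.sum_univ_two]
  simp [sq_abs]

@[simp] lemma norm_pt01 : ‖pt 0 1‖ = 1 := by
  rw [norm_pt]; norm_num

lemma lipschitzWith_pt (c : ℝ) : LipschitzWith 1 (fun t => pt c t) := by
  apply LipschitzWith.of_dist_le_mul
  intro x y
  rw [dist_pt]
  simp [Real.dist_eq, Real.sqrt_sq_eq_abs]

lemma coord_lip (x y : Euc 2) (i : Fin 2) : dist (x i) (y i) ≤ dist x y := by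
  rw [EuclideanSpace.dist_eq]
  have h1 : dist (x i) (y i) = Real.sqrt (dist (x i) (y i) ^ 2) :=
    (Real.sqrt_sq dist_nonneg).symm
  rw [h1]
  apply Real.sqrt_le_sqrt
  exact Finset.single_le_sum (f := fun j => dist (x j) (y j) ^ 2)
    (fun j _ => by positivity) (Finset.mem_univ i)

lemma hasDerivAt_vert (c : ℝ) (t : ℝ) : HasDerivAt (fun t => pt c t) (pt 0 1) t := by
  have h : (fun t => pt c t) = fun t => pt c 0 + t • pt 0 1 := by
    funext s; ext i
    fin_cases i <;> simp [pt]
  rw [h]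
  simpa using ((hasDerivAt_id t).smul_const (pt 0 1)).const_add (pt c 0)

lemma continuous_coord (i : Fin 2) : Continuous fun x : Euc 2 => x i :=
  (EuclideanSpace.proj i).continuous

lemma measurableSet_S12 : MeasurableSet S12 := by
  have hrw : S12 = ⋃ j : ℕ, {x : Euc 2 | (1 ≤ j ∧ x 0 = 1/(j:ℝ)) ∧ x 1 ∈ Icc (0:ℝ) 1} := by
    ext x
    simp only [S12, mem_setOf_eq, mem_iUnion]
    constructor
    · rintro ⟨⟨j, hj⟩, hx⟩; exact ⟨j, hj, hx⟩
    · rintro ⟨j, hj, hx⟩; exact ⟨⟨j, hj⟩, hx⟩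
  rw [hrw]
  apply MeasurableSet.iUnion
  intro j
  by_cases hj : 1 ≤ j
  · have : {x : Euc 2 | (1 ≤ j ∧ x 0 = 1/(j:ℝ)) ∧ x 1 ∈ Icc (0:ℝ) 1}
        = {x : Euc 2 | x 0 = 1/(j:ℝ)} ∩ {x : Euc 2 | x 1 ∈ Icc (0:ℝ) 1} := by
      ext x; simp [hj, mem_inter_iff]
    rw [this]
    exact ((isClosed_eq (continuous_coord 0) continuous_const).measurableSet).inter
      ((isClosed_Icc.preimage (continuous_coord 1)).measurableSet)
  · have : {x : Euc 2 | (1 ≤ j ∧ x 0 = 1/(j:ℝ)) ∧ x 1 ∈ Icc (0:ℝ) 1} = ∅ := by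
      ext x; simp [hj]
    rw [this]; exact MeasurableSet.empty

lemma measurable_b12 : Measurable b12 :=
  Measurable.ite measurableSet_S12 measurable_const measurable_const

lemma one_le_b12 (z : Euc 2) : 1 ≤ b12 z := by
  unfold b12; split
  · exact le_refl _
  · exact le_top


section Parts

lemma part1 : Countably1Rectifiable S12 := by
  refine ⟨fun i t => pt (1/((i:ℝ)+1)) t, fun _ => Icc 0 1,
    fun i => ⟨1, (lipschitzWith_pt _).lipschitzOnWith⟩,
    fun i => Metric.isBounded_Icc 0 1, ?_⟩
  ext x
  simp only [mem_iUnion, mem_image]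
  constructor
  · rintro ⟨⟨j, hj1, hj2⟩, hx1⟩
    obtain ⟨i, rfl⟩ : ∃ i, j = i + 1 := ⟨j - 1, (Nat.succ_pred_eq_of_pos hj1).symm⟩
    refine ⟨i, x 1, hx1, ?_⟩
    conv_rhs => rw [euc_ext x]
    rw [hj2]
    push_cast
    rfl
  · rintro ⟨i, t, ht, rfl⟩
    refine ⟨⟨i+1, Nat.le_add_left 1 i, ?_⟩, by simpa using ht⟩
    push_cast
    simp

lemma part23 (c : ℝ) : Tendsto (fun j : ℕ => pt (1/(j:ℝ)) c) atTop (𝓝 (pt 0 c)) := by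
  rw [tendsto_iff_dist_tendsto_zero]
  have h : ∀ j : ℕ, dist (pt (1/(j:ℝ)) c) (pt 0 c) = 1/(j:ℝ) := by
    intro j
    rw [dist_pt]
    rw [sub_zero, sub_self]
    rw [show ((1:ℝ)/(j:ℝ))^2 + (0:ℝ)^2 = (1/(j:ℝ))^2 by ring]
    rw [Real.sqrt_sq (by positivity)]
  simp only [h]
  exact tendsto_one_div_atTop_nhds_zero_nat

lemma part4 (j : ℕ) (hj : 1 ≤ j) :
    freeDist b12 (pt (1 / (j : ℝ)) 0) (pt (1 / (j : ℝ)) 1) = 1 := by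
  set γ : ℝ → Euc 2 := fun t => pt (1/(j:ℝ)) t with hγ
  have hlip : LipschitzWith 1 γ := lipschitzWith_pt _
  have hderiv : ∀ t, deriv γ t = pt 0 1 := fun t => (hasDerivAt_vert _ t).deriv
  have hcost : pathCost b12 γ = 1 := by
    unfold pathCost
    have hptw : ∀ t ∈ Icc (0:ℝ) 1, b12 (γ t) * ENNReal.ofReal ‖deriv γ t‖ = 1 := by
      intro t ht
      have hmem : γ t ∈ S12 := ⟨⟨j, hj, rfl⟩, ht⟩
      rw [hderiv t, norm_pt01, b12, if_pos hmem]
      simp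
    rw [setLIntegral_congr_fun measurableSet_Icc hptw]
    simp [Real.volume_Icc]
  apply le_antisymm
  · exact sInf_le ⟨γ, 1, hlip, rfl, rfl, hcost.symm⟩
  · apply le_sInf
    rintro c ⟨γ', K, hlip', h0, h1, rfl⟩
    have hkey : (1:ℝ≥0∞) = ENNReal.ofReal ‖γ' 1 - γ' 0‖ := by
      rw [h0, h1, pt_sub, sub_self, sub_zero, norm_pt01, ENNReal.ofReal_one]
    rw [hkey]
    calc ENNReal.ofReal ‖γ' 1 - γ' 0‖
        ≤ ∫⁻ t in Icc (0:ℝ) 1, ENNReal.ofReal ‖deriv γ' t‖ :=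
          lip_ofReal_norm_sub_le hlip' zero_le_one
      _ ≤ pathCost b12 γ' := by
          unfold pathCost
          refine lintegral_mono fun t => ?_
          conv_lhs => rw [← one_mul (ENNReal.ofReal ‖deriv γ' t‖)]
          exact mul_le_mul_left (one_le_b12 _) _

lemma part5 : freeDist b12 (pt 0 0) (pt 0 1) = ⊤ := by
  unfold freeDist
  rw [sInf_eq_top]
  rintro c ⟨γ, K, hlip, h0, h1, rfl⟩
  by_contra hfin
  unfold pathCost at hfin
  have hmeas : AEMeasurable (fun t => b12 (γ t) * ENNReal.ofReal ‖deriv γ t‖)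
      (volume.restrict (Icc (0:ℝ) 1)) :=
    ((measurable_b12.comp hlip.continuous.measurable).mul
      ((measurable_deriv γ).norm.ennreal_ofReal)).aemeasurable
  have hae := ae_lt_top' hmeas hfin
  have hae2 : ∀ᵐ t ∂(volume.restrict (Icc (0:ℝ) 1)), γ t ∉ S12 → deriv γ t = 0 := by
    filter_upwards [hae] with t ht hnot
    rw [b12, if_neg hnot] at ht
    by_contra hd
    have hne : ENNReal.ofReal ‖deriv γ t‖ ≠ 0 := by
      simp only [ne_eq, ENNReal.ofReal_eq_zero, not_le]
      exact norm_pos_iff.mpr hd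
    rw [ENNReal.top_mul hne] at ht
    exact absurd ht (lt_irrefl ⊤)
  have hdiffae : ∀ᵐ t ∂(volume : Measure ℝ), DifferentiableAt ℝ γ t :=
    hlip.ae_differentiableAt
  by_cases hS : ∃ t0 ∈ Icc (0:ℝ) 1, γ t0 ∈ S12
  · obtain ⟨t0, ht0, hS0⟩ := hS
    obtain ⟨⟨j, hj1, hj2⟩, -⟩ := hS0
    set u : ℝ → ℝ := fun t => γ t 0 with hu
    have hulip : LipschitzWith K u := LipschitzWith.of_dist_le_mul fun s t =>
      le_trans (coord_lip _ _ 0) (hlip.dist_le_mul s t)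
    have hj0 : (0:ℝ) < (j:ℝ) := by exact_mod_cast hj1
    have hαβ : 1/((j:ℝ)+1) < 1/(j:ℝ) := by
      apply one_div_lt_one_div_of_lt hj0; linarith
    have hu0 : u 0 = 0 := by rw [hu]; simp only; rw [h0]; simp
    have hut0 : u t0 = 1/(j:ℝ) := hj2
    obtain ⟨s1, s2, hs1, hs12, hs2, hus1, hus2, hmid⟩ :=
      crossing hulip.continuous ht0.1 (by rw [hu0]; positivity) hαβ (le_of_eq hut0.symm)
    have hsub : Ioc s1 s2 ⊆ Icc (0:ℝ) 1 := fun t ht =>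
      ⟨le_trans hs1 ht.1.le, le_trans ht.2 (le_trans hs2 ht0.2)⟩
    have hz : ∀ᵐ t ∂(volume.restrict (Ioc s1 s2)), deriv u t = 0 := by
      rw [← Measure.restrict_congr_set Ioo_ae_eq_Ioc]
      have hae3 : ∀ᵐ t ∂(volume.restrict (Ioo s1 s2)), γ t ∉ S12 → deriv γ t = 0 := by
        rw [Measure.restrict_congr_set Ioo_ae_eq_Ioc]
        exact ae_restrict_of_ae_restrict_of_subset hsub hae2
      filter_upwards [hae3, ae_restrict_of_ae hdiffae, ae_restrict_mem measurableSet_Ioo]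
        with t h1t h2t h3t
      have hnot : γ t ∉ S12 := by
        rintro ⟨⟨k, hk1, hk2⟩, -⟩
        have hmemk : u t ∈ Ioo (1/((j:ℝ)+1)) (1/(j:ℝ)) := hmid t h3t
        have hk0 : (0:ℝ) < (k:ℝ) := by exact_mod_cast hk1
        rw [hu] at hmemk
        simp only at hmemk
        rw [hk2] at hmemk
        have h5 : (j:ℝ) < (k:ℝ) := lt_of_one_div_lt_one_div hk0 hmemk.2
        have h6 : (k:ℝ) < (j:ℝ) + 1 :=
          lt_of_one_div_lt_one_div (by positivity) hmemk.1
        have h7 : j < k := by exact_mod_cast h5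
        have h8 : k < j + 1 := by exact_mod_cast h6
        omega
      have hd0 : deriv γ t = 0 := h1t hnot
      have hγd : HasDerivAt γ 0 t := hd0 ▸ h2t.hasDerivAt
      have hud := (EuclideanSpace.proj (0 : Fin 2)).hasFDerivAt.comp_hasDerivAt t hγd
      have hud2 : HasDerivAt u 0 t := by
        exact hud
      exact hud2.deriv
    have hfe := lipschitz_eq_integral_deriv hulip hs12.le
    rw [intervalIntegral.integral_of_le hs12.le] at hfe
    rw [integral_eq_zero_of_ae (by filter_upwards [hz] with t ht; simpa using ht)] at hfe
    rw [hus1, hus2] at hfe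
    have : (1:ℝ)/((j:ℝ)+1) < 1/(j:ℝ) := hαβ
    rw [sub_eq_zero] at hfe
    linarith [hfe]
  · push_neg at hS
    have hz : ∀ᵐ t ∂(volume.restrict (Ioc (0:ℝ) 1)), deriv γ t = 0 := by
      apply ae_restrict_of_ae_restrict_of_subset Ioc_subset_Icc_self
      filter_upwards [hae2, ae_restrict_mem measurableSet_Icc] with t h1t h2t
      exact h1t (hS t h2t)
    have hfe := lipschitz_eq_integral_deriv hlip (zero_le_one (α := ℝ))
    rw [intervalIntegral.integral_of_le zero_le_one] at hfe
    rw [integral_eq_zero_of_ae (by filter_upwards [hz] with t ht; simpa using ht)] at hfe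
    rw [sub_eq_zero, h0, h1] at hfe
    have : pt 0 1 1 = pt 0 0 1 := by rw [hfe]
    simp at this

end Parts

theorem urbanDist_not_lsc_counterexample :
    Countably1Rectifiable S12 ∧
    Tendsto (fun j : ℕ => pt (1 / (j : ℝ)) 0) atTop (𝓝 (pt 0 0)) ∧
    Tendsto (fun j : ℕ => pt (1 / (j : ℝ)) 1) atTop (𝓝 (pt 0 1)) ∧
    (∀ j : ℕ, 1 ≤ j → freeDist b12 (pt (1 / (j : ℝ)) 0) (pt (1 / (j : ℝ)) 1) = 1) ∧
    freeDist b12 (pt 0 0) (pt 0 1) = ⊤ :=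
  ⟨part1, part23 0, part23 1, fun j hj => part4 j hj, part5⟩
end
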